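/- Let f : 2^V → ℝ be monotone submodular, G ⊆ V, τ > 0, and let s₁,…,s_m be a random ordering of a uniform random m-subset S of a finite set R ⊆ V. If P(f(s_m | G ∪ {s₁,…,s_{m−1}}) ≥ τ) ≥ 1 − ε, then E[min{f(S|G), m·τ}] ≥ (1−ε)·m·τ. -/
import Mathlib


open Finset


lemma tele_key14 {V : Type*} [DecidableEq V] (f : Finset V → ℝ)
    (hsub : ∀ A B : Finset V, f (A ∪ B) + f (A ∩ B) ≤ f A + f B)
    (hmono : ∀ A B : Finset V, A ⊆ B → f A ≤ f B)
    (G : Finset V) (m : ℕ) (σ : Fin m → V) (hinj : Function.Injective σ) :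
    ∑ j : Fin m, (f (Finset.image σ Finset.univ ∪ G)
        - f ((Finset.image σ Finset.univ).erase (σ j) ∪ G))
      ≤ f (Finset.image σ Finset.univ ∪ G) - f G := by
  set S := Finset.image σ Finset.univ with hS
  set P : ℕ → Finset V := fun k => (Finset.univ.filter (fun i : Fin m => (i : ℕ) < k)).image σ ∪ G with hP
  have h0 : P 0 = G := by simp [hP]
  have hmm : P m = S ∪ G := by
    simp only [hP, hS]
    congr 1
    congr 1
    apply Finset.filter_true_of_mem
    intro i _
    exact i.isLt
  have hterm : ∀ k (hk : k < m),
      f (S ∪ G) - f (S.erase (σ ⟨k, hk⟩) ∪ G) ≤ f (P (k+1)) - f (P k) := by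
    intro k hk
    set j : Fin m := ⟨k, hk⟩ with hj
    have hAB : P (k+1) ∪ (S.erase (σ j) ∪ G) = S ∪ G := by
      ext x
      simp only [hP, hS, Finset.mem_union, Finset.mem_image, Finset.mem_erase,
        Finset.mem_filter, Finset.mem_univ, true_and]
      constructor
      · rintro ((⟨i, _, rfl⟩ | hx) | (⟨_, ⟨i, rfl⟩⟩ | hx)) <;> first
        | exact Or.inl ⟨_, rfl⟩
        | exact Or.inr hx
      · rintro (⟨i, rfl⟩ | hx)
        · by_cases hij : i = j
          · have hiv : (i : ℕ) = k := congrArg Fin.val hij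
            exact Or.inl (Or.inl ⟨i, by omega, rfl⟩)
          · exact Or.inr (Or.inl ⟨fun h => hij (hinj h), ⟨i, rfl⟩⟩)
        · exact Or.inr (Or.inr hx)
    have hsubset : P k ⊆ P (k+1) ∩ (S.erase (σ j) ∪ G) := by
      intro x hx
      simp only [hP, Finset.mem_union, Finset.mem_image, Finset.mem_filter,
        Finset.mem_univ, true_and] at hx
      rcases hx with ⟨i, hi, rfl⟩ | hx
      · refine Finset.mem_inter.2 ⟨?_, ?_⟩
        · exact Finset.mem_union_left _ (Finset.mem_image.2 ⟨i, by simp; omega, rfl⟩)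
        · refine Finset.mem_union_left _ (Finset.mem_erase.2 ⟨?_, ?_⟩)
          · intro h
            have hiv : (i : ℕ) = k := congrArg Fin.val (hinj h)
            omega
          · exact Finset.mem_image.2 ⟨i, Finset.mem_univ _, rfl⟩
      · refine Finset.mem_inter.2 ⟨?_, ?_⟩ <;> exact Finset.mem_union_right _ hx
    have h1 := hsub (P (k+1)) (S.erase (σ j) ∪ G)
    rw [hAB] at h1
    have h2 := hmono _ _ hsubset
    linarith
  have tel : ∑ k ∈ Finset.range m, (f (P (k+1)) - f (P k)) = f (P m) - f (P 0) :=
    Finset.sum_range_sub (fun k => f (P k)) m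
  calc ∑ j : Fin m, (f (S ∪ G) - f (S.erase (σ j) ∪ G))
      = ∑ j : Fin m, (fun k => if h : k < m then
          f (S ∪ G) - f (S.erase (σ ⟨k, h⟩) ∪ G) else 0) (j : ℕ) := by
        apply Finset.sum_congr rfl
        intro j _
        simp only [dif_pos j.isLt, Fin.eta]
    _ = ∑ k ∈ Finset.range m, if h : k < m then
          f (S ∪ G) - f (S.erase (σ ⟨k, h⟩) ∪ G) else 0 :=
        Fin.sum_univ_eq_sum_range
          (fun k => if h : k < m then f (S ∪ G) - f (S.erase (σ ⟨k, h⟩) ∪ G) else 0) m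
    _ ≤ ∑ k ∈ Finset.range m, (f (P (k+1)) - f (P k)) := by
        apply Finset.sum_le_sum
        intro k hk
        rw [dif_pos (Finset.mem_range.1 hk)]
        exact hterm k (Finset.mem_range.1 hk)
    _ = f (S ∪ G) - f G := by rw [tel, hmm, h0]


lemma swap_card14 {V : Type*} [Fintype V] [DecidableEq V] (f : Finset V → ℝ)
    (G R : Finset V) (τ : ℝ) (m : ℕ)
    (E : Finset (Fin m → V))
    (hE : E = Finset.univ.filter fun σ : Fin m → V =>
      Function.Injective σ ∧ ∀ i, σ i ∈ R)
    (j last : Fin m) :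
    (E.filter fun σ => τ ≤ f (Finset.image σ Finset.univ ∪ G) -
        f ((Finset.image σ Finset.univ).erase (σ j) ∪ G)).card
    = (E.filter fun σ => τ ≤ f (Finset.image σ Finset.univ ∪ G) -
        f ((Finset.image σ Finset.univ).erase (σ last) ∪ G)).card := by
  set π := Equiv.swap j last with hπ
  have himg : ∀ σ : Fin m → V, Finset.image (σ ∘ π) Finset.univ = Finset.image σ Finset.univ := by
    intro σ
    ext x
    simp only [Finset.mem_image, Finset.mem_univ, true_and, Function.comp]
    constructor
    · rintro ⟨i, rfl⟩; exact ⟨π i, rfl⟩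
    · rintro ⟨i, rfl⟩; exact ⟨π.symm i, by rw [Equiv.apply_symm_apply]⟩
  have hmemE : ∀ σ : Fin m → V, σ ∈ E → σ ∘ π ∈ E := by
    intro σ hσ
    rw [hE, Finset.mem_filter] at hσ ⊢
    exact ⟨Finset.mem_univ _, hσ.2.1.comp π.injective, fun i => hσ.2.2 _⟩
  apply Finset.card_bij' (fun σ _ => σ ∘ π) (fun σ _ => σ ∘ π)
  · intro σ hσ
    rw [Finset.mem_filter] at hσ ⊢
    refine ⟨hmemE σ hσ.1, ?_⟩
    have : (σ ∘ π) last = σ j := by simp [hπ, Function.comp, Equiv.swap_apply_right]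
    rw [himg, this]
    exact hσ.2
  · intro σ hσ
    rw [Finset.mem_filter] at hσ ⊢
    refine ⟨hmemE σ hσ.1, ?_⟩
    have : (σ ∘ π) j = σ last := by simp [hπ, Function.comp, Equiv.swap_apply_left]
    rw [himg, this]
    exact hσ.2
  · intro σ _
    funext i
    simp [hπ, Function.comp]
  · intro σ _
    funext i
    simp [hπ, Function.comp]

/-- If the last element of a uniformly random ordering of a uniform random
`m`-subset `S` of `R` has marginal gain at least `τ` with probability at least
`1 − ε`, then `E[min{f(S|G), m·τ}] ≥ (1−ε)·m·τ`.  The random ordering is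
modelled as a uniform injective sequence `σ : Fin m → V` with values in `R`,
with `S = image σ` and last element `σ last`. -/
theorem stmt_14 {V : Type*} [Fintype V] [DecidableEq V] (f : Finset V → ℝ)
    (hsub : ∀ A B : Finset V, f (A ∪ B) + f (A ∩ B) ≤ f A + f B)
    (hmono : ∀ A B : Finset V, A ⊆ B → f A ≤ f B)
    (G R : Finset V) (τ : ℝ) (hτ : 0 < τ)
    (m : ℕ) (hm : 1 ≤ m) (hmR : m ≤ R.card)
    (ε : ℝ) (hε0 : 0 ≤ ε) (hε1 : ε ≤ 1)
    (E : Finset (Fin m → V))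
    (hE : E = Finset.univ.filter fun σ : Fin m → V =>
      Function.Injective σ ∧ ∀ i, σ i ∈ R)
    (last : Fin m) (hlast : (last : ℕ) = m - 1)
    (hprob : ((E.filter fun σ =>
        τ ≤ f (Finset.image σ Finset.univ ∪ G) -
            f ((Finset.image σ Finset.univ).erase (σ last) ∪ G)).card : ℝ)
      ≥ (1 - ε) * E.card) :
    (∑ σ ∈ E, min (f (Finset.image σ Finset.univ ∪ G) - f G) (m * τ)) / E.card
      ≥ (1 - ε) * (m * τ) := by
  -- E is nonempty
  have hEne : E.Nonempty := by
    obtain ⟨t, htR, htc⟩ := Finset.exists_subset_card_eq hmR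
    refine ⟨fun i => (t.equivFin.symm (Fin.cast htc.symm i) : V), ?_⟩
    rw [hE, Finset.mem_filter]
    refine ⟨Finset.mem_univ _, ?_, fun i => htR (t.equivFin.symm _).2⟩
    intro a b hab
    have := t.equivFin.symm.injective (Subtype.val_injective hab)
    exact Fin.cast_injective _ this
  have hEc : (0 : ℝ) < E.card := by
    exact_mod_cast Finset.card_pos.2 hEne
  -- pointwise bound
  have hpoint : ∀ σ ∈ E,
      ∑ j : Fin m, (if τ ≤ f (Finset.image σ Finset.univ ∪ G) -
          f ((Finset.image σ Finset.univ).erase (σ j) ∪ G) then τ else 0)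
        ≤ min (f (Finset.image σ Finset.univ ∪ G) - f G) (m * τ) := by
    intro σ hσ
    have hinj : Function.Injective σ := by
      rw [hE, Finset.mem_filter] at hσ; exact hσ.2.1
    set S := Finset.image σ Finset.univ with hS
    set b : Fin m → ℝ := fun j => f (S ∪ G) - f (S.erase (σ j) ∪ G) with hb
    have hb0 : ∀ j, 0 ≤ b j := by
      intro j
      have : S.erase (σ j) ∪ G ⊆ S ∪ G :=
        Finset.union_subset_union_left (Finset.erase_subset _ _)
      have := hmono _ _ this
      simp [hb]; linarith
    set K := Finset.univ.filter (fun j : Fin m => τ ≤ b j) with hK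
    have hsum : ∑ j : Fin m, (if τ ≤ b j then τ else 0) = K.card * τ := by
      rw [← Finset.sum_filter, ← hK, Finset.sum_const, nsmul_eq_mul]
    rw [hsum]
    apply le_min
    · calc (K.card : ℝ) * τ ≤ ∑ j ∈ K, b j := by
            rw [← nsmul_eq_mul, ← Finset.sum_const]
            exact Finset.sum_le_sum (fun j hj => (Finset.mem_filter.1 hj).2)
        _ ≤ ∑ j : Fin m, b j :=
            Finset.sum_le_sum_of_subset_of_nonneg (Finset.subset_univ _)
              (fun j _ _ => hb0 j)
        _ ≤ f (S ∪ G) - f G := tele_key14 f hsub hmono G m σ hinj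
    · have : (K.card : ℝ) ≤ m := by
        have h := Finset.card_filter_le Finset.univ (fun j : Fin m => τ ≤ b j)
        simp only [Finset.card_univ, Fintype.card_fin] at h
        exact_mod_cast h
      nlinarith
  -- main chain
  rw [ge_iff_le, le_div_iff₀ hEc]
  calc (1 - ε) * (m * τ) * E.card
      = ∑ j : Fin m, τ * ((1 - ε) * E.card) := by
        rw [Finset.sum_const, Finset.card_univ, Fintype.card_fin, nsmul_eq_mul]
        ring
    _ ≤ ∑ j : Fin m, τ * ((E.filter fun σ =>
          τ ≤ f (Finset.image σ Finset.univ ∪ G) -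
              f ((Finset.image σ Finset.univ).erase (σ j) ∪ G)).card : ℝ) := by
        apply Finset.sum_le_sum
        intro j _
        apply mul_le_mul_of_nonneg_left _ hτ.le
        rw [swap_card14 f G R τ m E hE j last]
        exact hprob
    _ = ∑ j : Fin m, ∑ σ ∈ E, (if τ ≤ f (Finset.image σ Finset.univ ∪ G) -
          f ((Finset.image σ Finset.univ).erase (σ j) ∪ G) then τ else 0) := by
        apply Finset.sum_congr rfl
        intro j _
        rw [← Finset.sum_filter, Finset.sum_const, nsmul_eq_mul, mul_comm]
    _ = ∑ σ ∈ E, ∑ j : Fin m, (if τ ≤ f (Finset.image σ Finset.univ ∪ G) -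
          f ((Finset.image σ Finset.univ).erase (σ j) ∪ G) then τ else 0) :=
        Finset.sum_comm
    _ ≤ ∑ σ ∈ E, min (f (Finset.image σ Finset.univ ∪ G) - f G) (m * τ) :=
        Finset.sum_le_sum hpoint
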